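/- Let H be a real Hilbert space and a, b ∈ H. For q ≥ 0 and an interval I = (t₀,t₁) of length τ, define the H-valued polynomial w(t) = ((-1)^q/2)(L_q(t) − L_{q+1}(t))·(a − b), where L_q, L_{q+1} are affinely mapped Legendre polynomials on I. Then ∫_I ‖w(t)‖_H² dt = (τ(q+1)/((2q+1)(2q+3))) ‖a − b‖_H². -/

import Mathlib

set_option maxHeartbeats 1000000



open Polynomial

/-- The `q`-th Legendre polynomial, via the Rodrigues formula, normalized so that
`L_q(1) = 1`. -/
noncomputable def legendreP (q : ℕ) : Polynomial ℝ :=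
  Polynomial.C (1 / (2 ^ q * (Nat.factorial q : ℝ))) *
    (⇑(Polynomial.derivative (R := ℝ)))^[q] ((Polynomial.X ^ 2 - 1) ^ q)

/-- The `q`-th Legendre polynomial mapped affinely from `(-1,1)` to `(t₀,t₁)`. -/
noncomputable def legendreMapped (q : ℕ) (t₀ t₁ : ℝ) : ℝ → ℝ :=
  fun t => (legendreP q).eval ((2 * t - t₀ - t₁) / (t₁ - t₀))

noncomputable def fpoly (q : ℕ) : Polynomial ℝ := (Polynomial.X ^ 2 - 1) ^ q

-- boundary vanishing
lemma eval_iter_fpoly_zero (q j : ℕ) (hj : j < q) (c : ℝ) (hc : c = 1 ∨ c = -1) :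
    ((⇑(derivative (R := ℝ)))^[j] (fpoly q)).eval c = 0 := by
  have hdvd : (X - C c) ^ q ∣ fpoly q := by
    apply pow_dvd_pow_of_dvd
    rcases hc with rfl | rfl
    · exact ⟨X + 1, by simp [map_one]; ring⟩
    · exact ⟨X - 1, by simp; ring⟩
  have h2 := Polynomial.pow_sub_dvd_iterate_derivative_of_pow_dvd j hdvd
  obtain ⟨r, hr⟩ := h2
  rw [hr]
  have : q - j ≠ 0 := Nat.sub_ne_zero_of_lt hj
  simp [eval_pow, zero_pow this]

-- polynomial integrability helper
lemma pint (p : Polynomial ℝ) (a b : ℝ) :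
    IntervalIntegrable (fun x => p.eval x) MeasureTheory.volume a b :=
  p.continuous.intervalIntegrable a b

lemma pint2 (p r : Polynomial ℝ) (a b : ℝ) :
    IntervalIntegrable (fun x => p.eval x * r.eval x) MeasureTheory.volume a b :=
  (p.continuous.mul r.continuous).intervalIntegrable a b

-- polynomial IBP
lemma poly_ibp (u v : Polynomial ℝ)
    (h1 : u.eval 1 = 0) (h2 : u.eval (-1) = 0) :
    (∫ x in (-1:ℝ)..1, (derivative u).eval x * v.eval x)
      = -∫ x in (-1:ℝ)..1, u.eval x * (derivative v).eval x := by
  have := intervalIntegral.integral_mul_deriv_eq_deriv_mul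
    (u := fun x => u.eval x) (v := fun x => v.eval x)
    (u' := fun x => (derivative u).eval x) (v' := fun x => (derivative v).eval x)
    (a := (-1:ℝ)) (b := 1)
    (fun x _ => u.hasDerivAt x) (fun x _ => v.hasDerivAt x)
    (pint _ _ _) (pint _ _ _)
  rw [h1, h2] at this
  linarith [this]

noncomputable abbrev D : Polynomial ℝ → Polynomial ℝ := ⇑(derivative (R := ℝ))

lemma ibp_iter (q : ℕ) (v : Polynomial ℝ) :
    ∀ k, k ≤ q →
      (∫ x in (-1:ℝ)..1, (D^[q] (fpoly q)).eval x * v.eval x)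
        = (-1:ℝ)^k * ∫ x in (-1:ℝ)..1, (D^[q-k] (fpoly q)).eval x * (D^[k] v).eval x := by
  intro k
  induction k with
  | zero => simp
  | succ k ih =>
    intro hk
    have hk' : k ≤ q := le_of_lt hk
    rw [ih hk']
    have h1 : q - k = (q - (k+1)) + 1 := by omega
    have h2 : D^[q-k] (fpoly q) = derivative (D^[q-(k+1)] (fpoly q)) := by
      rw [h1, Function.iterate_succ']; rfl
    have hb : q - (k+1) < q := by omega
    rw [h2, poly_ibp _ _ (eval_iter_fpoly_zero q _ hb 1 (Or.inl rfl))
      (eval_iter_fpoly_zero q _ hb (-1) (Or.inr rfl))]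
    rw [Function.iterate_succ', Function.comp_apply]
    ring

lemma iter_derivative_top (q : ℕ) :
    D^[2*q] (fpoly q) = C ((2*q).factorial : ℝ) := by
  have hm : (fpoly q).Monic := ((monic_X_pow 2).sub_of_left (by
    simpa using degree_one_lt_degree_X_pow (by norm_num) )).pow q
  have hdeg : (fpoly q).natDegree = 2*q := by
    unfold fpoly
    rw [natDegree_pow]
    have h2 : (X^2 - 1 : ℝ[X]).natDegree = 2 := by compute_degree!
    rw [h2]; ring
  rcases Nat.eq_zero_or_pos q with rfl | hq
  · simp [fpoly]
  have hsplit : fpoly q = X^(2*q) + (fpoly q - X^(2*q)) := by ring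
  have hlt : (fpoly q - X^(2*q)).natDegree < 2*q := by
    by_cases h : fpoly q - X^(2*q) = 0
    · simp [h]; omega
    · have hd := Polynomial.degree_sub_lt (p := fpoly q) (q := X^(2*q))
        (by rw [degree_eq_natDegree hm.ne_zero, hdeg, degree_X_pow])
        hm.ne_zero (by rw [hm.leadingCoeff, leadingCoeff_X_pow])
      rw [degree_eq_natDegree hm.ne_zero, hdeg] at hd
      exact (Polynomial.natDegree_lt_iff_degree_lt h).mpr hd
  have hadd : ∀ n (p r : ℝ[X]), D^[n] (p + r) = D^[n] p + D^[n] r := by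
    intro n
    induction n with
    | zero => intro p r; rfl
    | succ n ih =>
      intro p r
      simp only [Function.iterate_succ', Function.comp_apply, ih, derivative_add]
  rw [hsplit, hadd, Polynomial.iterate_derivative_X_pow_eq_smul]
  rw [Polynomial.iterate_derivative_eq_zero hlt]
  simp [Nat.descFactorial_self, smul_eq_C_mul]

noncomputable def Jint (q : ℕ) : ℝ := ∫ x in (-1:ℝ)..1, (x^2-1)^q

lemma Jint_rec (q : ℕ) :
    (2*(q:ℝ)+3) * Jint (q+1) = -(2*(q:ℝ)+2) * Jint q := by
  have hc : ∀ m : ℕ, Continuous (fun x : ℝ => (x^2-1)^m) := fun m =>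
    ((continuous_pow 2).sub continuous_const).pow m
  have key : (∫ x in (-1:ℝ)..1,
      ((2*(q:ℝ)+3) * (x^2-1)^(q+1) + (2*(q:ℝ)+2) * (x^2-1)^q)) = 0 := by
    have hderiv : ∀ x ∈ Set.uIcc (-1:ℝ) 1,
        HasDerivAt (fun x : ℝ => x * (x^2-1)^(q+1))
          ((2*(q:ℝ)+3) * (x^2-1)^(q+1) + (2*(q:ℝ)+2) * (x^2-1)^q) x := by
      intro x _
      have h1 : HasDerivAt (fun x : ℝ => x^2 - 1) (2*x) x := by
        simpa using (hasDerivAt_pow 2 x).sub_const 1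
      have h2 := h1.pow (q+1)
      have h3 : HasDerivAt (fun x : ℝ => x * (x^2-1)^(q+1))
          (1 * (x^2-1)^(q+1) + x * (((q+1 : ℕ) : ℝ) * (x^2-1)^(q+1-1) * (2*x))) x :=
        (hasDerivAt_id x).mul h2
      convert h3 using 1
      push_cast
      ring
    have hint : IntervalIntegrable
        (fun x : ℝ => (2*(q:ℝ)+3) * (x^2-1)^(q+1) + (2*(q:ℝ)+2) * (x^2-1)^q)
        MeasureTheory.volume (-1) 1 :=
      ((continuous_const.mul (hc (q+1))).add
        (continuous_const.mul (hc q))).intervalIntegrable _ _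
    have := intervalIntegral.integral_eq_sub_of_hasDerivAt hderiv hint
    rw [this]
    norm_num
  rw [intervalIntegral.integral_add
      (show IntervalIntegrable (fun x : ℝ => (2*(q:ℝ)+3) * (x^2-1)^(q+1)) MeasureTheory.volume (-1) 1 from
        (continuous_const.mul (hc (q+1))).intervalIntegrable _ _)
      (show IntervalIntegrable (fun x : ℝ => (2*(q:ℝ)+2) * (x^2-1)^q) MeasureTheory.volume (-1) 1 from
        (continuous_const.mul (hc q)).intervalIntegrable _ _),
    intervalIntegral.integral_const_mul, intervalIntegral.integral_const_mul] at key
  unfold Jint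
  linarith [key]

lemma Jint_eq (q : ℕ) :
    Jint q = (-1:ℝ)^q * 2^(2*q+1) * ((q.factorial : ℝ))^2 / ((2*q+1).factorial : ℝ) := by
  induction q with
  | zero => simp [Jint]; norm_num
  | succ q ih =>
    have hrec := Jint_rec q
    have h3 : (2*(q:ℝ)+3) ≠ 0 := by positivity
    have hJ : Jint (q+1) = -(2*(q:ℝ)+2) * Jint q / (2*(q:ℝ)+3) := by
      field_simp at hrec ⊢
      linarith [hrec]
    rw [hJ, ih]
    have hfac : ((2*(q+1)+1).factorial : ℝ)
        = (2*(q:ℝ)+3) * (2*(q:ℝ)+2) * ((2*q+1).factorial : ℝ) := by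
      have : 2*(q+1)+1 = (2*q+1) + 1 + 1 := by ring
      rw [this, Nat.factorial_succ, Nat.factorial_succ]
      push_cast
      ring
    have hfq : ((q+1).factorial : ℝ) = ((q:ℝ)+1) * (q.factorial : ℝ) := by
      rw [Nat.factorial_succ]; push_cast; ring
    rw [hfac, hfq]
    have hne1 : ((2*q+1).factorial : ℝ) ≠ 0 := Nat.cast_ne_zero.mpr (2*q+1).factorial_ne_zero
    field_simp
    ring

lemma legendre_sq_int (q : ℕ) :
    (∫ x in (-1:ℝ)..1, (legendreP q).eval x ^ 2) = 2 / (2*(q:ℝ)+1) := by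
  have hcq : legendreP q = C (1 / (2 ^ q * (q.factorial : ℝ))) * D^[q] (fpoly q) := rfl
  have step1 : (∫ x in (-1:ℝ)..1, (legendreP q).eval x ^ 2)
      = (1 / (2 ^ q * (q.factorial : ℝ)))^2
        * ∫ x in (-1:ℝ)..1, (D^[q] (fpoly q)).eval x * (D^[q] (fpoly q)).eval x := by
    rw [← intervalIntegral.integral_const_mul]
    congr 1
    funext x
    rw [hcq]
    simp [eval_mul]
    ring
  have step2 := ibp_iter q (D^[q] (fpoly q)) q le_rfl
  have h2q : D^[q] (D^[q] (fpoly q)) = D^[2*q] (fpoly q) := by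
    rw [← Function.iterate_add_apply]
    congr 1
    ring
  rw [Nat.sub_self, Function.iterate_zero, id_eq, h2q, iter_derivative_top] at step2
  have step3 : (∫ x in (-1:ℝ)..1, (fpoly q).eval x * (C ((2*q).factorial : ℝ)).eval x)
      = ((2*q).factorial : ℝ) * Jint q := by
    unfold Jint
    rw [← intervalIntegral.integral_const_mul]
    congr 1
    funext x
    simp [fpoly, Jint]
    ring
  rw [step1, step2, step3, Jint_eq]
  have hfac : ((2*q+1).factorial : ℝ) = (2*(q:ℝ)+1) * ((2*q).factorial : ℝ) := by
    rw [Nat.factorial_succ]; push_cast; ring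
  rw [hfac]
  have h1 : ((2*q).factorial : ℝ) ≠ 0 := Nat.cast_ne_zero.mpr (2*q).factorial_ne_zero
  have h2 : ((q).factorial : ℝ) ≠ 0 := Nat.cast_ne_zero.mpr q.factorial_ne_zero
  have h3 : (2:ℝ)^q ≠ 0 := by positivity
  have h4 : (2*(q:ℝ)+1) ≠ 0 := by positivity
  have h5 : (2:ℝ)^(2*q+1) = 2 * ((2:ℝ)^q)^2 := by
    rw [pow_succ, two_mul, pow_add]
    ring
  rw [h5]
  have hmm : (-1:ℝ)^(q*2) = 1 := by rw [mul_comm, pow_mul]; norm_num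
  field_simp
  ring_nf
  rw [hmm]

lemma legendre_parity (q : ℕ) (x : ℝ) :
    (legendreP q).eval (-x) = (-1:ℝ)^q * (legendreP q).eval x := by
  have key : ∀ j, (D^[j] (fpoly q)).comp (-X) = (-1:ℝ)^j • (D^[j] (fpoly q)) := by
    intro j
    induction j with
    | zero =>
      simp only [Function.iterate_zero, id_eq, pow_zero, one_smul]
      unfold fpoly
      rw [pow_comp, sub_comp, pow_comp, X_comp, one_comp, neg_pow, neg_sq]
      simp
    | succ j ih =>
      have := congrArg (⇑(derivative (R := ℝ))) ih
      rw [derivative_comp, derivative_smul] at this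
      have hdx : derivative (-X : ℝ[X]) = -1 := by simp
      rw [hdx] at this
      have : -(derivative (D^[j] (fpoly q))).comp (-X)
          = (-1:ℝ)^j • derivative (D^[j] (fpoly q)) := by
        rw [← this]; ring
      have h2 : (derivative (D^[j] (fpoly q))).comp (-X)
          = (-1:ℝ)^(j+1) • derivative (D^[j] (fpoly q)) := by
        rw [pow_succ]
        have := congrArg Neg.neg this
        rw [neg_neg] at this
        rw [this]
        module
      rw [Function.iterate_succ', Function.comp_apply]
      exact h2
  have hq := congrArg (eval x) (key q)
  rw [eval_comp] at hq
  simp only [eval_neg, eval_X, eval_smul, smul_eq_mul] at hq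
  unfold legendreP
  simp only [eval_mul, eval_C]
  rw [show ((⇑(Polynomial.derivative (R := ℝ)))^[q] ((Polynomial.X ^ 2 - 1) ^ q))
    = D^[q] (fpoly q) from rfl, hq]
  ring

lemma legendre_cross_int (q : ℕ) :
    (∫ x in (-1:ℝ)..1, (legendreP q).eval x * (legendreP (q+1)).eval x) = 0 := by
  have h1 : (∫ x in (-1:ℝ)..1,
      (legendreP q).eval (-x) * (legendreP (q+1)).eval (-x))
      = ∫ x in (-1:ℝ)..1, (legendreP q).eval x * (legendreP (q+1)).eval x := by
    rw [intervalIntegral.integral_comp_neg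
      (f := fun x => (legendreP q).eval x * (legendreP (q+1)).eval x)]
    norm_num
  have h2 : (∫ x in (-1:ℝ)..1,
      (legendreP q).eval (-x) * (legendreP (q+1)).eval (-x))
      = -∫ x in (-1:ℝ)..1, (legendreP q).eval x * (legendreP (q+1)).eval x := by
    rw [← intervalIntegral.integral_neg]
    congr 1
    funext x
    rw [legendre_parity q, legendre_parity (q+1)]
    have hm : (-1:ℝ)^q * (-1:ℝ)^(q+1) = -1 := by
      rw [pow_succ, ← mul_assoc, ← pow_add, ← two_mul, pow_mul]; norm_num
    linear_combination ((legendreP q).eval x * (legendreP (q+1)).eval x) * hm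
  linarith [h1, h2]

theorem jump_estimator_explicit_form
    {H : Type*} [NormedAddCommGroup H] [InnerProductSpace ℝ H]
    (a b : H) (q : ℕ) (t₀ t₁ τ : ℝ) (ht : t₀ < t₁) (hτ : τ = t₁ - t₀)
    (w : ℝ → H)
    (hw : w = fun t =>
      (((-1 : ℝ) ^ q / 2) * (legendreMapped q t₀ t₁ t - legendreMapped (q + 1) t₀ t₁ t)) •
        (a - b)) :
    (∫ t in t₀..t₁, ‖w t‖ ^ 2) =
      (τ * ((q : ℝ) + 1) / ((2 * (q : ℝ) + 1) * (2 * (q : ℝ) + 3))) * ‖a - b‖ ^ 2 := by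
  subst hw hτ
  have hd : t₁ - t₀ ≠ 0 := sub_ne_zero.mpr ht.ne'
  set g : ℝ → ℝ := fun x =>
    (((-1 : ℝ) ^ q / 2) * ((legendreP q).eval x - (legendreP (q+1)).eval x))^2 with hgdef
  -- Step A: pointwise norm
  have hA : ∀ t : ℝ,
      ‖(((-1 : ℝ) ^ q / 2) *
        (legendreMapped q t₀ t₁ t - legendreMapped (q + 1) t₀ t₁ t)) • (a - b)‖ ^ 2
      = g ((2 * t - t₀ - t₁) / (t₁ - t₀)) * ‖a - b‖ ^ 2 := by
    intro t
    rw [norm_smul, mul_pow, Real.norm_eq_abs, sq_abs]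
    rfl
  simp only [hA]
  rw [intervalIntegral.integral_mul_const]
  -- Step B: change of variables
  have hB : (∫ t in t₀..t₁, g ((2 * t - t₀ - t₁) / (t₁ - t₀)))
      = ((t₁ - t₀)/2) * ∫ x in (-1:ℝ)..1, g x := by
    have e1 : (fun t : ℝ => g ((2 * t - t₀ - t₁) / (t₁ - t₀)))
        = fun t => g ((2/(t₁-t₀)) * t + (-(t₀+t₁)/(t₁-t₀))) := by
      funext t
      congr 1
      field_simp
      ring
    rw [e1]
    have hc : (2/(t₁-t₀)) ≠ 0 := by positivity
    rw [intervalIntegral.integral_comp_mul_add g hc (-(t₀+t₁)/(t₁-t₀))]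
    have hl : (2/(t₁-t₀)) * t₀ + (-(t₀+t₁)/(t₁-t₀)) = -1 := by
      field_simp
      ring
    have hu : (2/(t₁-t₀)) * t₁ + (-(t₀+t₁)/(t₁-t₀)) = 1 := by
      field_simp
      ring
    rw [hl, hu, smul_eq_mul]
    congr 1
    rw [eq_comm, div_eq_iff (by norm_num : (2:ℝ) ≠ 0), inv_eq_one_div]
    field_simp
  rw [hB]
  -- Step C: value of the reference integral
  have hm : ((-1:ℝ)^q)^2 = 1 := by
    rw [← pow_mul, mul_comm, pow_mul]; norm_num
  have hg : ∀ x : ℝ, g x =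
      (1/4) * ((legendreP q).eval x)^2
      - (1/2) * ((legendreP q).eval x * (legendreP (q+1)).eval x)
      + (1/4) * ((legendreP (q+1)).eval x)^2 := by
    intro x
    rw [hgdef]
    linear_combination
      ((((legendreP q).eval x - (legendreP (q+1)).eval x))^2/4) * hm
  have hcont : ∀ m : ℕ, Continuous fun x : ℝ => (legendreP m).eval x :=
    fun m => (legendreP m).continuous
  have hC : (∫ x in (-1:ℝ)..1, g x)
      = (1/4) * (2/(2*(q:ℝ)+1)) - (1/2) * 0 + (1/4) * (2/(2*(q:ℝ)+3)) := by
    simp only [hg]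
    rw [intervalIntegral.integral_add
        (show IntervalIntegrable (fun x : ℝ => (1/4:ℝ) * ((legendreP q).eval x)^2
          - (1/2:ℝ) * ((legendreP q).eval x * (legendreP (q+1)).eval x)) MeasureTheory.volume (-1) 1 from
        (((continuous_const.mul ((hcont q).pow 2)).sub
          (continuous_const.mul ((hcont q).mul (hcont (q+1))))).intervalIntegrable _ _))
        (show IntervalIntegrable (fun x : ℝ => (1/4:ℝ) * ((legendreP (q+1)).eval x)^2) MeasureTheory.volume (-1) 1 from
        ((continuous_const.mul ((hcont (q+1)).pow 2)).intervalIntegrable _ _)),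
      intervalIntegral.integral_sub
        (show IntervalIntegrable (fun x : ℝ => (1/4:ℝ) * ((legendreP q).eval x)^2) MeasureTheory.volume (-1) 1 from
        ((continuous_const.mul ((hcont q).pow 2)).intervalIntegrable _ _))
        (show IntervalIntegrable (fun x : ℝ => (1/2:ℝ) * ((legendreP q).eval x * (legendreP (q+1)).eval x)) MeasureTheory.volume (-1) 1 from
        ((continuous_const.mul ((hcont q).mul (hcont (q+1)))).intervalIntegrable _ _)),
      intervalIntegral.integral_const_mul, intervalIntegral.integral_const_mul,
      intervalIntegral.integral_const_mul,
      legendre_sq_int q, legendre_sq_int (q+1), legendre_cross_int q]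
    push_cast
    ring
  rw [hC]
  have h1 : (2*(q:ℝ)+1) ≠ 0 := by positivity
  have h3 : (2*(q:ℝ)+3) ≠ 0 := by positivity
  field_simp
  ring
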